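/- Assume MD, SCD*, and the boundary assumptions. Suppose the nonempty bundle b_r satisfies t_{b_r} < t_b for every nonempty bundle b ≠ b_r and φ(b,t1) < φ(b_r,t1) for every bundle b with ¬(b_r ⊆ b); and suppose φ(b_1,t1) < φ(b_2,t1) whenever b_r ⊆ b_1 ⊊ b_2 ⊆ b*. Assume further: (1) there is a good i ∉ b_r such that φ(b*\{i},t1) > φ(b*\{j},t1) for every good j ≠ i, and φ(b_r∪{i},t1) < φ(b_r∪{j},t1) for every good j ∉ b_r with j ≠ i; (2) there exist λ1, λ2, μ1, μ2 ∈ (0,1) with φ(b_r∪{i},t1) = λ1·φ(b*,t1) + (1−λ1)·φ(b_r,t1), φ(b*\{i},t1) = λ2·φ(b*,t1) + (1−λ2)·φ(b_r,t1), φ(b_r∪{i},t0) = μ1·φ(b*,t0) + (1−μ1)·φ(b_r,t0), φ(b*\{i},t0) = μ2·φ(b*,t0) + (1−μ2)·φ(b_r,t0), satisfying λ1 < λ2 and μ1/λ1 < (μ2−μ1)/(λ2−λ1) < (1−μ2)/(1−λ2); and for every bundle b̃ with b_r ⊊ b̃ ⊊ b* and b̃ ∉ {b_r∪{i}, b*\{i}}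 there exist real numbers λ_b̃, μ_b̃ with φ(b̃,t1) = λ_b̃·φ(b*,t1) + (1−λ_b̃)·φ(b_r,t1) and φ(b̃,t0) = μ_b̃·φ(b*,t0) + (1−μ_b̃)·φ(b_r,t0), such that μ_b̃ > (μ1/λ1)·λ_b̃, μ_b̃ > ((1−μ2)/(1−λ2))·λ_b̃ + (μ2−λ2)/(1−λ2), λ_b̃ ≥ λ1, and μ_b̃ ≤ μ2. Then the minimal optimal menu is a tree menu. -/

import Mathlib

namespace Paper

abbrev Bundle (n : ℕ) := Finset (Fin n)

variable {n : ℕ}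

/-- A stochastic bundle: nonnegative weights on bundles summing to one. -/
def IsStoch (a : Bundle n → ℝ) : Prop :=
  (∀ b, 0 ≤ a b) ∧ ∑ b, a b = 1

/-- The point mass at a bundle, viewed as a stochastic bundle. -/
def pt (b : Bundle n) : Bundle n → ℝ := fun b' => if b' = b then 1 else 0

/-- Virtual value of a stochastic bundle (linear extension). -/
def phiA (φ : Bundle n → ℝ → ℝ) (a : Bundle n → ℝ) (t : ℝ) : ℝ :=
  ∑ b, a b * φ b t

/-- A function is single-crossing on a set: its sign is monotone there. -/
def SingleCrossingOn (g : ℝ → ℝ) (T : Set ℝ) : Prop :=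
  MonotoneOn (fun t => Real.sign (g t)) T ∨ AntitoneOn (fun t => Real.sign (g t)) T

/-- Assumption SCD*: differences of virtual values of stochastic bundles are
single-crossing in the type. -/
def SCDstar (φ : Bundle n → ℝ → ℝ) (t0 t1 : ℝ) : Prop :=
  ∀ a a' : Bundle n → ℝ, IsStoch a → IsStoch a' →
    SingleCrossingOn (fun t => phiA φ a t - phiA φ a' t) (Set.Icc t0 t1)

/-- Assumption MD: differences of virtual values of deterministic bundles are
monotone in the type. -/
def MD (φ : Bundle n → ℝ → ℝ) (t0 t1 : ℝ) : Prop :=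
  ∀ b b' : Bundle n,
    MonotoneOn (fun t => φ b t - φ b' t) (Set.Icc t0 t1) ∨
    AntitoneOn (fun t => φ b t - φ b' t) (Set.Icc t0 t1)

/-- No two distinct bundles have identical virtual value functions on T. -/
def Distinct (φ : Bundle n → ℝ → ℝ) (t0 t1 : ℝ) : Prop :=
  ∀ b b' : Bundle n, b ≠ b' → ∃ t ∈ Set.Icc t0 t1, φ b t ≠ φ b' t

/-- A stochastic bundle is very weakly dominated. -/
def VWD (φ : Bundle n → ℝ → ℝ) (t0 t1 : ℝ) (a : Bundle n → ℝ) : Prop :=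
  ∃ a' : Bundle n → ℝ, IsStoch a' ∧ a' ≠ a ∧
    ∀ t ∈ Set.Icc t0 t1, phiA φ a t ≤ phiA φ a' t

/-- A bundle is a never strict best response. -/
def NeverStrictBR (φ : Bundle n → ℝ → ℝ) (t0 t1 : ℝ) (b : Bundle n) : Prop :=
  ∀ t ∈ Set.Icc t0 t1, ∃ b' : Bundle n, b' ≠ b ∧ φ b t ≤ φ b' t

/-- A menu is optimal if at every type some element attains the upper envelope. -/
def OptimalMenu (φ : Bundle n → ℝ → ℝ) (t0 t1 : ℝ) (S : Finset (Bundle n)) : Prop :=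
  ∀ t ∈ Set.Icc t0 t1, ∃ b ∈ S, ∀ b' : Bundle n, φ b' t ≤ φ b t

/-- A minimal optimal menu. -/
def MinimalOptimalMenu (φ : Bundle n → ℝ → ℝ) (t0 t1 : ℝ) (S : Finset (Bundle n)) : Prop :=
  OptimalMenu φ t0 t1 S ∧ ∀ S' : Finset (Bundle n), S' ⊂ S → ¬ OptimalMenu φ t0 t1 S'

/-- A nested menu: any two elements are comparable under set inclusion. -/
def IsNestedMenu (S : Finset (Bundle n)) : Prop :=
  ∀ b1 ∈ S, ∀ b2 ∈ S, b1 ⊆ b2 ∨ b2 ⊆ b1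

/-- A tree menu: a nonempty root contained in every nonempty element, and two
incomparable elements. -/
def IsTreeMenu (S : Finset (Bundle n)) : Prop :=
  (∃ r ∈ S, r ≠ (∅ : Bundle n) ∧ ∀ b ∈ S, b ≠ (∅ : Bundle n) → r ⊆ b) ∧
  (∃ b1 ∈ S, ∃ b2 ∈ S, ¬ b1 ⊆ b2 ∧ ¬ b2 ⊆ b1)


-- ===== auxiliary lemmas =====

lemma sign_nonneg_of_nonneg {x : ℝ} (h : 0 ≤ x) : 0 ≤ Real.sign x := by
  rcases eq_or_lt_of_le h with h' | h'
  · simp [← h', Real.sign_zero]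
  · rw [Real.sign_of_pos h']; norm_num

lemma nonneg_of_sign_nonneg {x : ℝ} (h : 0 ≤ Real.sign x) : 0 ≤ x := by
  by_contra hx
  rw [Real.sign_of_neg (lt_of_not_ge hx)] at h; norm_num at h

lemma isStoch_pt (b : Bundle n) : IsStoch (pt b) := by
  constructor
  · intro b'; unfold pt; split <;> norm_num
  · simp [pt]

lemma phiA_pt (φ : Bundle n → ℝ → ℝ) (b : Bundle n) (t : ℝ) : phiA φ (pt b) t = φ b t := by
  unfold phiA pt
  rw [Finset.sum_eq_single b]
  · simp
  · intro b' _ hb'; simp [hb']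
  · intro h; exact absurd (Finset.mem_univ b) h

/-- a two-point mixture -/
def mix2 (w : ℝ) (c1 c2 : Bundle n) : Bundle n → ℝ := fun x => w * pt c1 x + (1 - w) * pt c2 x

lemma isStoch_mix2 {w : ℝ} (h0 : 0 ≤ w) (h1 : w ≤ 1) (c1 c2 : Bundle n) :
    IsStoch (mix2 w c1 c2) := by
  constructor
  · intro b; unfold mix2 pt
    have : (0:ℝ) ≤ 1 - w := by linarith
    split <;> split <;> nlinarith
  · unfold mix2
    rw [Finset.sum_add_distrib, ← Finset.mul_sum, ← Finset.mul_sum,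
      (isStoch_pt c1).2, (isStoch_pt c2).2]
    ring

lemma phiA_mix2 (φ : Bundle n → ℝ → ℝ) (w : ℝ) (c1 c2 : Bundle n) (t : ℝ) :
    phiA φ (mix2 w c1 c2) t = w * φ c1 t + (1 - w) * φ c2 t := by
  unfold phiA mix2
  have h1 := phiA_pt φ c1 t
  have h2 := phiA_pt φ c2 t
  unfold phiA at h1 h2
  calc (∑ b, (w * pt c1 b + (1 - w) * pt c2 b) * φ b t)
      = w * (∑ b, pt c1 b * φ b t) + (1 - w) * (∑ b, pt c2 b * φ b t) := by
        rw [Finset.mul_sum, Finset.mul_sum, ← Finset.sum_add_distrib]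
        congr 1; funext b; ring
    _ = w * φ c1 t + (1 - w) * φ c2 t := by rw [h1, h2]

lemma sc_nonneg {g : ℝ → ℝ} {t0 t1 : ℝ} (ht : t0 ≤ t1)
    (hsc : SingleCrossingOn g (Set.Icc t0 t1)) (h0 : 0 ≤ g t0) (h1 : 0 ≤ g t1) :
    ∀ t ∈ Set.Icc t0 t1, 0 ≤ g t := by
  intro t htt
  rcases hsc with hm | hm
  · have := hm (Set.mem_Icc.mpr ⟨le_refl t0, ht⟩) htt htt.1
    exact nonneg_of_sign_nonneg (le_trans (sign_nonneg_of_nonneg h0) this)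
  · have := hm htt (Set.mem_Icc.mpr ⟨ht, le_refl t1⟩) htt.2
    exact nonneg_of_sign_nonneg (le_trans (sign_nonneg_of_nonneg h1) this)

lemma sc_pattern {g : ℝ → ℝ} {t0 t1 : ℝ}
    (hsc : SingleCrossingOn g (Set.Icc t0 t1)) {x y z : ℝ}
    (hx : x ∈ Set.Icc t0 t1) (hy : y ∈ Set.Icc t0 t1) (hz : z ∈ Set.Icc t0 t1)
    (hxy : x ≤ y) (hyz : y ≤ z)
    (h1 : g x < 0) (h2 : 0 ≤ g y) (h3 : g z < 0) : False := by
  rcases hsc with hm | hm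
  · have := hm hy hz hyz
    simp only [] at this
    rw [Real.sign_of_neg h3] at this
    have h2' := sign_nonneg_of_nonneg h2
    linarith
  · have := hm hx hy hxy
    simp only [] at this
    rw [Real.sign_of_neg h1] at this
    have h2' := sign_nonneg_of_nonneg h2
    linarith

lemma cover_exists {t0 t1 : ℝ} (φ : Bundle n → ℝ → ℝ)
    (hcont : ∀ b : Bundle n, ContinuousOn (φ b) (Set.Icc t0 t1))
    (hpair : ∀ c c' : Bundle n, SingleCrossingOn (fun t => φ c t - φ c' t) (Set.Icc t0 t1))
    (b : Bundle n)
    (hb : ∀ t ∈ Set.Icc t0 t1, ∃ c, c ≠ b ∧ φ b t ≤ φ c t) (ht : t0 ≤ t1) :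
    ∃ c1 c2 : Bundle n, c1 ≠ b ∧ c2 ≠ b ∧ ∃ x ∈ Set.Icc t0 t1,
      (∀ s ∈ Set.Icc t0 t1, s ≤ x → φ b s ≤ φ c1 s) ∧
      (∀ s ∈ Set.Icc t0 t1, x ≤ s → φ b s ≤ φ c2 s) := by
  set I := Set.Icc t0 t1 with hI
  set D : Bundle n → Set ℝ := fun c => I ∩ (fun t => φ c t - φ b t) ⁻¹' (Set.Ici 0) with hD
  have hmemD : ∀ c t, t ∈ D c ↔ (t ∈ I ∧ 0 ≤ φ c t - φ b t) := by
    intro c t; rfl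
  have hDclosed : ∀ c, IsClosed (D c) :=
    fun c => ((hcont c).sub (hcont b)).preimage_isClosed_of_isClosed isClosed_Icc isClosed_Ici
  have hclass : ∀ c : Bundle n,
      (∀ x ∈ D c, ∀ s ∈ I, s ≤ x → s ∈ D c) ∨ (∀ x ∈ D c, ∀ s ∈ I, x ≤ s → s ∈ D c) := by
    intro c
    rcases hpair c b with hm | hm
    · right
      intro x hx s hs hxs
      rw [hmemD] at hx ⊢
      refine ⟨hs, ?_⟩
      have h2 := hm hx.1 hs hxs
      simp only [] at h2
      exact nonneg_of_sign_nonneg (le_trans (sign_nonneg_of_nonneg hx.2) h2)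
    · left
      intro x hx s hs hxs
      rw [hmemD] at hx ⊢
      refine ⟨hs, ?_⟩
      have h2 := hm hs hx.1 hxs
      simp only [] at h2
      exact nonneg_of_sign_nonneg (le_trans (sign_nonneg_of_nonneg hx.2) h2)
  set Dl : Set ℝ := ⋃ c : {c : Bundle n // c ≠ b ∧ ∀ x ∈ D c, ∀ s ∈ I, s ≤ x → s ∈ D c}, D c.val with hDl
  set Du : Set ℝ := ⋃ c : {c : Bundle n // c ≠ b ∧ ∀ x ∈ D c, ∀ s ∈ I, x ≤ s → s ∈ D c}, D c.val with hDu
  have hDlc : IsClosed Dl := isClosed_iUnion_of_finite (fun c => hDclosed c.val)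
  have hDuc : IsClosed Du := isClosed_iUnion_of_finite (fun c => hDclosed c.val)
  have hcover : I ⊆ Dl ∪ Du := by
    intro t htI
    obtain ⟨c, hcb, hle⟩ := hb t htI
    have htD : t ∈ D c := (hmemD c t).mpr ⟨htI, by linarith⟩
    rcases hclass c with h | h
    · exact Or.inl (Set.mem_iUnion.mpr ⟨⟨c, hcb, h⟩, htD⟩)
    · exact Or.inr (Set.mem_iUnion.mpr ⟨⟨c, hcb, h⟩, htD⟩)
  have ht0I : t0 ∈ I := Set.mem_Icc.mpr ⟨le_refl t0, ht⟩
  have ht1I : t1 ∈ I := Set.mem_Icc.mpr ⟨ht, le_refl t1⟩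
  have hDl0 : (I ∩ Dl).Nonempty := by
    obtain ⟨c, hcb, hle⟩ := hb t0 ht0I
    have ht0D : t0 ∈ D c := (hmemD c t0).mpr ⟨ht0I, by linarith⟩
    have hdown : ∀ x ∈ D c, ∀ s ∈ I, s ≤ x → s ∈ D c := by
      rcases hclass c with h | h
      · exact h
      · intro x hx s hs hsx
        exact h t0 ht0D s hs hs.1
    exact ⟨t0, ht0I, Set.mem_iUnion.mpr ⟨⟨c, hcb, hdown⟩, ht0D⟩⟩
  have hDu1 : (I ∩ Du).Nonempty := by
    obtain ⟨c, hcb, hle⟩ := hb t1 ht1I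
    have ht1D : t1 ∈ D c := (hmemD c t1).mpr ⟨ht1I, by linarith⟩
    have hup : ∀ x ∈ D c, ∀ s ∈ I, x ≤ s → s ∈ D c := by
      rcases hclass c with h | h
      · intro x hx s hs hxs
        exact h t1 ht1D s hs hs.2
      · exact h
    exact ⟨t1, ht1I, Set.mem_iUnion.mpr ⟨⟨c, hcb, hup⟩, ht1D⟩⟩
  obtain ⟨x, hxI, hxl, hxu⟩ :=
    isPreconnected_closed_iff.mp isPreconnected_Icc Dl Du hDlc hDuc hcover hDl0 hDu1
  obtain ⟨⟨c1, hc1b, hc1down⟩, hxD1⟩ := Set.mem_iUnion.mp hxl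
  obtain ⟨⟨c2, hc2b, hc2up⟩, hxD2⟩ := Set.mem_iUnion.mp hxu
  refine ⟨c1, c2, hc1b, hc2b, x, hxI, ?_, ?_⟩
  · intro s hs hsx
    have := (hmemD c1 s).mp (hc1down x hxD1 s hs hsx)
    linarith [this.2]
  · intro s hs hxs
    have := (hmemD c2 s).mp (hc2up x hxD2 s hs hxs)
    linarith [this.2]

lemma mix_exists {t0 t1 : ℝ} {f1 f2 g : ℝ → ℝ} (ht : t0 ≤ t1)
    (hsc : ∀ w : ℝ, 0 ≤ w → w ≤ 1 →
      SingleCrossingOn (fun t => w * f1 t + (1 - w) * f2 t - g t) (Set.Icc t0 t1))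
    {x : ℝ} (hx : x ∈ Set.Icc t0 t1) (h1 : g x ≤ f1 x) (h2 : g x ≤ f2 x)
    (h10 : g t0 ≤ f1 t0) (h21 : g t1 ≤ f2 t1) :
    ∃ w : ℝ, 0 ≤ w ∧ w ≤ 1 ∧ g t0 ≤ w * f1 t0 + (1 - w) * f2 t0 ∧
      g t1 ≤ w * f1 t1 + (1 - w) * f2 t1 := by
  set x0 := f1 t0 - g t0 with hx0
  set y0 := f2 t0 - g t0 with hy0
  set x1 := f1 t1 - g t1 with hx1
  set y1 := f2 t1 - g t1 with hy1
  clear_value x0 y0 x1 y1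
  have hx0n : 0 ≤ x0 := by simp [hx0]; linarith
  have hy1n : 0 ≤ y1 := by simp [hy1]; linarith
  by_cases hy0n : 0 ≤ y0
  · exact ⟨0, le_refl 0, by norm_num, by simp [hy0] at hy0n; linarith, by linarith⟩
  by_cases hx1n : 0 ≤ x1
  · exact ⟨1, by norm_num, le_refl 1, by simp; linarith, by simp [hx1] at hx1n; linarith⟩
  push_neg at hy0n hx1n
  have hden0 : 0 < x0 - y0 := by linarith
  have hden1 : 0 < y1 - x1 := by linarith
  set w0 := -y0 / (x0 - y0) with hw0
  set w1 := y1 / (y1 - x1) with hw1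
  have hw0pos : 0 < w0 := div_pos (by linarith) hden0
  have hw0le : w0 ≤ 1 := by
    rw [hw0, div_le_one hden0]; linarith
  have hw1nn : 0 ≤ w1 := div_nonneg hy1n (le_of_lt hden1)
  have hw1lt : w1 < 1 := by
    rw [hw1, div_lt_one hden1]; linarith
  have key0 : w0 * x0 + (1 - w0) * y0 = 0 := by
    have hwx : w0 * (x0 - y0) = -y0 := by rw [hw0]; exact div_mul_cancel₀ _ hden0.ne'
    linear_combination hwx
  have key1 : w1 * x1 + (1 - w1) * y1 = 0 := by
    rw [hw1]; field_simp; ring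
  clear_value w0 w1
  by_cases hww : w0 ≤ w1
  · refine ⟨w0, le_of_lt hw0pos, hw0le, by nlinarith, ?_⟩
    have : w0 * x1 + (1 - w0) * y1 ≥ w1 * x1 + (1 - w1) * y1 := by nlinarith
    nlinarith
  · push_neg at hww
    exfalso
    set w := (w0 + w1) / 2 with hw
    clear_value w
    have hwpos : 0 < w := by rw [hw]; linarith
    have hwlt : w < 1 := by rw [hw]; linarith
    have hwltw0 : w < w0 := by rw [hw]; linarith
    have hwgtw1 : w1 < w := by rw [hw]; linarith
    have hft0 : w * f1 t0 + (1 - w) * f2 t0 - g t0 < 0 := by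
      have hprod : w * x0 - w * y0 < w0 * x0 - w0 * y0 := by
        nlinarith [mul_lt_mul_of_pos_right hwltw0 hden0]
      have hgoal : w * f1 t0 + (1 - w) * f2 t0 - g t0 = y0 + (w * x0 - w * y0) := by
        rw [hx0, hy0]; ring
      rw [hgoal]; linarith [key0]
    have hft1 : w * f1 t1 + (1 - w) * f2 t1 - g t1 < 0 := by
      have hprod : w * x1 - w * y1 < w1 * x1 - w1 * y1 := by
        nlinarith [mul_lt_mul_of_pos_right hwgtw1 hden1]
      have hgoal : w * f1 t1 + (1 - w) * f2 t1 - g t1 = y1 + (w * x1 - w * y1) := by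
        rw [hx1, hy1]; ring
      rw [hgoal]; linarith [key1]
    have hftx : 0 ≤ w * f1 x + (1 - w) * f2 x - g x := by
      have a1 : 0 ≤ w * (f1 x - g x) := mul_nonneg hwpos.le (by linarith)
      have a2 : 0 ≤ (1 - w) * (f2 x - g x) := mul_nonneg (by linarith) (by linarith)
      have hexp : w * f1 x + (1 - w) * f2 x - g x
          = w * (f1 x - g x) + (1 - w) * (f2 x - g x) := by ring
      rw [hexp]; linarith
    exact sc_pattern (hsc w (le_of_lt hwpos) (le_of_lt hwlt))
      (Set.mem_Icc.mpr ⟨le_refl t0, ht⟩) hx (Set.mem_Icc.mpr ⟨ht, le_refl t1⟩)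
      hx.1 hx.2 hft0 hftx hft1

set_option maxHeartbeats 2000000 in
/-- **Theorem 34 (tree bundling via a least-favorite good).** Under MD, SCD*, the
boundary assumptions, the root conditions, monotonicity of the top type's valuation
above the root, the existence of a least-favorite good i outside the root, and the
stated conditions on the coefficients λ1, λ2, μ1, μ2 and on all other intermediate
bundles, the minimal optimal menu is a tree menu. -/
theorem stmt14 {n : ℕ} (hn : 1 ≤ n) (t0 t1 : ℝ) (ht : t0 < t1)
    (φ : Bundle n → ℝ → ℝ)
    (hcont : ∀ b : Bundle n, ContinuousOn (φ b) (Set.Icc t0 t1))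
    (hdist : Distinct φ t0 t1)
    (hmd : MD φ t0 t1)
    (hscd : SCDstar φ t0 t1)
    (hempty : ∀ t ∈ Set.Icc t0 t1, φ (∅ : Bundle n) t = 0)
    (hneg : ∀ b : Bundle n, b ≠ ∅ → φ b t0 < 0)
    (hpos : ∀ b : Bundle n, b ≠ ∅ → 0 < φ b t1)
    (tz : Bundle n → ℝ)
    (htz_mem : ∀ b : Bundle n, b ≠ ∅ → tz b ∈ Set.Ioo t0 t1)
    (htz_zero : ∀ b : Bundle n, b ≠ ∅ → φ b (tz b) = 0)
    (htz_uniq : ∀ b : Bundle n, b ≠ ∅ → ∀ s ∈ Set.Icc t0 t1, φ b s = 0 → s = tz b)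
    (br : Bundle n) (hbr : br ≠ ∅)
    (hroot1 : ∀ b : Bundle n, b ≠ ∅ → b ≠ br → tz br < tz b)
    (hroot2 : ∀ b : Bundle n, ¬ br ⊆ b → φ b t1 < φ br t1)
    (hmono : ∀ b1 b2 : Bundle n, br ⊆ b1 → b1 ⊂ b2 → b2 ⊆ Finset.univ →
      φ b1 t1 < φ b2 t1)
    (i : Fin n) (hi : i ∉ br)
    (hleast1 : ∀ j : Fin n, j ≠ i →
      φ (Finset.univ \ {j}) t1 < φ (Finset.univ \ {i}) t1)
    (hleast2 : ∀ j : Fin n, j ∉ br → j ≠ i →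
      φ (insert i br) t1 < φ (insert j br) t1)
    (lam1 lam2 mu1 mu2 : ℝ)
    (hlam1 : lam1 ∈ Set.Ioo (0 : ℝ) 1) (hlam2 : lam2 ∈ Set.Ioo (0 : ℝ) 1)
    (hmu1 : mu1 ∈ Set.Ioo (0 : ℝ) 1) (hmu2 : mu2 ∈ Set.Ioo (0 : ℝ) 1)
    (heq1 : φ (insert i br) t1 = lam1 * φ Finset.univ t1 + (1 - lam1) * φ br t1)
    (heq2 : φ (Finset.univ \ {i}) t1 = lam2 * φ Finset.univ t1 + (1 - lam2) * φ br t1)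
    (heq3 : φ (insert i br) t0 = mu1 * φ Finset.univ t0 + (1 - mu1) * φ br t0)
    (heq4 : φ (Finset.univ \ {i}) t0 = mu2 * φ Finset.univ t0 + (1 - mu2) * φ br t0)
    (hlam_lt : lam1 < lam2)
    (hineq1 : mu1 / lam1 < (mu2 - mu1) / (lam2 - lam1))
    (hineq2 : (mu2 - mu1) / (lam2 - lam1) < (1 - mu2) / (1 - lam2))
    (hother : ∀ c : Bundle n, br ⊂ c → c ⊂ Finset.univ →
      c ≠ insert i br → c ≠ Finset.univ \ {i} →
      ∃ lamc muc : ℝ,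
        φ c t1 = lamc * φ Finset.univ t1 + (1 - lamc) * φ br t1 ∧
        φ c t0 = muc * φ Finset.univ t0 + (1 - muc) * φ br t0 ∧
        mu1 / lam1 * lamc < muc ∧
        (1 - mu2) / (1 - lam2) * lamc + (mu2 - lam2) / (1 - lam2) < muc ∧
        lam1 ≤ lamc ∧ muc ≤ mu2) :
    ∀ S : Finset (Bundle n), MinimalOptimalMenu φ t0 t1 S → IsTreeMenu S := by
  intro S hS
  have ht01 : t0 ≤ t1 := le_of_lt ht
  have mem0 : t0 ∈ Set.Icc t0 t1 := Set.mem_Icc.mpr ⟨le_refl t0, ht01⟩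
  have mem1 : t1 ∈ Set.Icc t0 t1 := Set.mem_Icc.mpr ⟨ht01, le_refl t1⟩
  haveI : Nonempty (Fin n) := ⟨⟨0, hn⟩⟩
  set U : Bundle n := Finset.univ with hUdef
  set bh : Bundle n := insert i br with hbhdef
  set wh : Bundle n := U \ {i} with hwhdef
  -- single-crossing transfer lemmas
  have hpair : ∀ c c' : Bundle n,
      SingleCrossingOn (fun t => φ c t - φ c' t) (Set.Icc t0 t1) := by
    intro c c'
    have h := hscd (pt c) (pt c') (isStoch_pt c) (isStoch_pt c')
    have he : (fun t => phiA φ (pt c) t - phiA φ (pt c') t) = (fun t => φ c t - φ c' t) := by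
      funext t; rw [phiA_pt, phiA_pt]
    rwa [he] at h
  have hscmp : ∀ (b c1 c2 : Bundle n) (w : ℝ), 0 ≤ w → w ≤ 1 →
      SingleCrossingOn (fun t => w * φ c1 t + (1 - w) * φ c2 t - φ b t) (Set.Icc t0 t1) := by
    intro b c1 c2 w hw0 hw1
    have h := hscd (mix2 w c1 c2) (pt b) (isStoch_mix2 hw0 hw1 c1 c2) (isStoch_pt b)
    have he : (fun t => phiA φ (mix2 w c1 c2) t - phiA φ (pt b) t)
        = (fun t => w * φ c1 t + (1 - w) * φ c2 t - φ b t) := by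
      funext t; rw [phiA_mix2, phiA_pt]
    rwa [he] at h
  have hscpm : ∀ (b c1 c2 : Bundle n) (w : ℝ), 0 ≤ w → w ≤ 1 →
      SingleCrossingOn (fun t => φ b t - (w * φ c1 t + (1 - w) * φ c2 t)) (Set.Icc t0 t1) := by
    intro b c1 c2 w hw0 hw1
    have h := hscd (pt b) (mix2 w c1 c2) (isStoch_pt b) (isStoch_mix2 hw0 hw1 c1 c2)
    have he : (fun t => phiA φ (pt b) t - phiA φ (mix2 w c1 c2) t)
        = (fun t => φ b t - (w * φ c1 t + (1 - w) * φ c2 t)) := by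
      funext t; rw [phiA_mix2, phiA_pt]
    rwa [he] at h
  -- sign facts
  have tzIcc : ∀ b : Bundle n, b ≠ ∅ → tz b ∈ Set.Icc t0 t1 := by
    intro b hb; have := htz_mem b hb; exact ⟨le_of_lt this.1, le_of_lt this.2⟩
  have hsmono : ∀ b : Bundle n, b ≠ ∅ →
      MonotoneOn (fun t => Real.sign (φ b t - φ ∅ t)) (Set.Icc t0 t1) := by
    intro b hb
    rcases hpair b ∅ with hm | hm
    · exact hm
    · exfalso
      have h2 := hm mem0 mem1 ht01
      simp only [] at h2
      rw [hempty t0 mem0, hempty t1 mem1, sub_zero, sub_zero,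
        Real.sign_of_neg (hneg b hb), Real.sign_of_pos (hpos b hb)] at h2
      linarith only [h2]
  have hsneg : ∀ b : Bundle n, b ≠ ∅ → ∀ s ∈ Set.Icc t0 t1, s < tz b → φ b s < 0 := by
    intro b hb s hs hstz
    have h2 := hsmono b hb hs (tzIcc b hb) (le_of_lt hstz)
    simp only [] at h2
    rw [hempty _ (tzIcc b hb), sub_zero, htz_zero b hb, Real.sign_zero,
      hempty s hs, sub_zero] at h2
    rcases lt_trichotomy (φ b s) 0 with h | h | h
    · exact h
    · exact absurd (htz_uniq b hb s hs h) (ne_of_lt hstz)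
    · rw [Real.sign_of_pos h] at h2; linarith only [h2]
  have hspos : ∀ b : Bundle n, b ≠ ∅ → ∀ s ∈ Set.Icc t0 t1, tz b < s → 0 < φ b s := by
    intro b hb s hs hstz
    have h2 := hsmono b hb (tzIcc b hb) hs (le_of_lt hstz)
    simp only [] at h2
    rw [hempty _ (tzIcc b hb), sub_zero, htz_zero b hb, Real.sign_zero,
      hempty s hs, sub_zero] at h2
    rcases lt_trichotomy (φ b s) 0 with h | h | h
    · rw [Real.sign_of_neg h] at h2; linarith only [h2]
    · exact absurd (htz_uniq b hb s hs h) (ne_of_gt hstz)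
    · exact h
  -- basic bundle facts
  have hUne : U ≠ ∅ := (Finset.univ_nonempty).ne_empty
  have hbrneU : br ≠ U := by
    intro h; apply hi; rw [h]; exact Finset.mem_univ i
  have hbrssU : br ⊂ U := Finset.ssubset_univ_iff.mpr hbrneU
  have hD1 : 0 < φ U t1 - φ br t1 := by
    have := hmono br U (Finset.Subset.refl br) hbrssU (Finset.Subset.refl _)
    linarith only [this]
  have hbhbr : br ⊆ bh := Finset.subset_insert i br
  have hbhne : bh ≠ ∅ := Finset.insert_ne_empty i br
  have hbrnebh : br ≠ bh := by
    intro h; apply hi; rw [h]; exact Finset.mem_insert_self i br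
  have hbrssbh : br ⊂ bh := Finset.ssubset_insert hi
  have hbh1 : φ br t1 < φ bh t1 :=
    hmono br bh (Finset.Subset.refl br) hbrssbh (Finset.subset_univ _)
  have hbrwh : br ⊆ wh := by
    intro j hj
    rw [hwhdef, Finset.mem_sdiff]
    refine ⟨Finset.mem_univ j, ?_⟩
    simp only [Finset.mem_singleton]
    rintro rfl; exact hi hj
  have hinwh : i ∉ wh := by
    rw [hwhdef]; simp
  have hwhnebr : wh ≠ br := by
    intro h
    rw [h] at heq2
    nlinarith only [heq2, mul_pos hlam2.1 hD1]
  have hwhne : wh ≠ ∅ := by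
    intro h
    exact hbr (Finset.subset_empty.mp (h ▸ hbrwh))
  have hwhneU : wh ≠ U := by
    intro h; apply hinwh; rw [h]; exact Finset.mem_univ i
  -- incomparability of bh and wh
  have hnbw : ¬ bh ⊆ wh := fun h => hinwh (h (Finset.mem_insert_self i br))
  have hnwb : ¬ wh ⊆ bh := by
    intro h
    have hUbh : U ⊆ bh := by
      intro j _
      by_cases hj : j = i
      · rw [hj]; exact Finset.mem_insert_self i br
      · refine h ?_
        rw [hwhdef, Finset.mem_sdiff]
        exact ⟨Finset.mem_univ j, by simpa using hj⟩
    have hbhU : bh = U := Finset.Subset.antisymm (Finset.subset_univ _) hUbh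
    apply hwhnebr
    rw [hwhdef, ← hbhU, hbhdef, Finset.sdiff_singleton_eq_erase, Finset.erase_insert hi]
  -- deltas
  have heMono : MonotoneOn (fun t => φ U t - φ br t) (Set.Icc t0 t1) := by
    have htzU : tz br < tz U := hroot1 U hUne (Ne.symm hbrneU)
    have hUz : φ U (tz br) < 0 := hsneg U hUne (tz br) (tzIcc br hbr) htzU
    rcases hmd U br with hm | hm
    · exact hm
    · exfalso
      have h2 := hm (tzIcc br hbr) mem1 (tzIcc br hbr).2
      simp only [] at h2
      rw [htz_zero br hbr] at h2
      linarith only [h2, hD1, hUz]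
  have hD0 : φ U t0 - φ br t0 < 0 := by
    have h2 := heMono mem0 (tzIcc br hbr) (tzIcc br hbr).1
    simp only [] at h2
    rw [htz_zero br hbr] at h2
    have hUz : φ U (tz br) < 0 :=
      hsneg U hUne (tz br) (tzIcc br hbr) (hroot1 U hUne (Ne.symm hbrneU))
    linarith only [h2, hUz]
  set D1v : ℝ := φ U t1 - φ br t1 with hD1def
  set D0v : ℝ := φ U t0 - φ br t0 with hD0def
  have hD1' : 0 < D1v := hD1
  -- coordinate forms of endpoints
  have hbh1' : φ bh t1 = φ br t1 + lam1 * D1v := by rw [heq1, hD1def]; ring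
  have hbh0' : φ bh t0 = φ br t0 + mu1 * D0v := by rw [heq3, hD0def]; ring
  have hwh1' : φ wh t1 = φ br t1 + lam2 * D1v := by rw [heq2, hD1def]; ring
  have hwh0' : φ wh t0 = φ br t0 + mu2 * D0v := by rw [heq4, hD0def]; ring
  have hU1' : φ U t1 = φ br t1 + 1 * D1v := by rw [hD1def]; ring
  have hU0' : φ U t0 = φ br t0 + 1 * D0v := by rw [hD0def]; ring
  -- algebraic consequences of the slope conditions
  have hl2l1 : (0:ℝ) < lam2 - lam1 := by linarith only [hlam_lt]
  have h1l2 : (0:ℝ) < 1 - lam2 := by linarith only [hlam2.2]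
  have hpoly1 : mu1 * (lam2 - lam1) < (mu2 - mu1) * lam1 := by
    rw [div_lt_div_iff₀ hlam1.1 hl2l1] at hineq1; linarith only [hineq1]
  have hpoly2 : (mu2 - mu1) * (1 - lam2) < (1 - mu2) * (lam2 - lam1) := by
    rw [div_lt_div_iff₀ hl2l1 h1l2] at hineq2; linarith only [hineq2]
  have hALG1 : mu1 < lam1 := by
    by_contra h
    push_neg at h
    have a : lam1 * (lam2 - lam1) ≤ mu1 * (lam2 - lam1) :=
      mul_le_mul_of_nonneg_right h (le_of_lt hl2l1)
    have b : lam1 * (lam2 - lam1) < (mu2 - mu1) * lam1 := lt_of_le_of_lt a hpoly1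
    rw [mul_comm lam1 (lam2 - lam1)] at b
    have k1 : lam2 - lam1 < mu2 - mu1 := lt_of_mul_lt_mul_right b (le_of_lt hlam1.1)
    have a2 : (lam2 - lam1) * (1 - lam2) < (mu2 - mu1) * (1 - lam2) :=
      mul_lt_mul_of_pos_right k1 h1l2
    have b2 : (lam2 - lam1) * (1 - lam2) < (1 - mu2) * (lam2 - lam1) := lt_trans a2 hpoly2
    rw [mul_comm (lam2 - lam1) (1 - lam2)] at b2
    have c2 : 1 - lam2 < 1 - mu2 := lt_of_mul_lt_mul_right b2 (le_of_lt hl2l1)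
    linarith only [c2, k1, h]
  have hALG3 : mu2 < lam2 := by
    by_contra h
    push_neg at h
    have a : (1 - mu2) * (lam2 - lam1) ≤ (1 - lam2) * (lam2 - lam1) :=
      mul_le_mul_of_nonneg_right (by linarith only [h]) (le_of_lt hl2l1)
    have b : (mu2 - mu1) * (1 - lam2) < (1 - lam2) * (lam2 - lam1) := lt_of_lt_of_le hpoly2 a
    rw [mul_comm (1 - lam2) (lam2 - lam1)] at b
    have k1 : mu2 - mu1 < lam2 - lam1 := lt_of_mul_lt_mul_right b (le_of_lt h1l2)
    linarith only [k1, h, hALG1]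
  have hALG2 : mu1 * lam2 < lam1 * mu2 := by nlinarith only [hpoly1]
  have hALG4 : (1 - mu2) * lam1 + (mu2 - lam2) < (1 - lam2) * mu1 := by
    nlinarith only [hpoly2]
  -- the crossing point τ of bh and br
  have hh0 : φ bh t0 - φ br t0 < 0 := by
    rw [hbh0']; nlinarith only [mul_pos hmu1.1 (neg_pos.mpr hD0)]
  have hh1 : 0 < φ bh t1 - φ br t1 := by
    rw [hbh1']; nlinarith only [mul_pos hlam1.1 hD1']
  obtain ⟨τ, hτI, hτ0⟩ : ∃ τ ∈ Set.Icc t0 t1, φ bh τ - φ br τ = 0 := by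
    have hivt := intermediate_value_Icc ht01 ((hcont bh).sub (hcont br))
    have h0m : (0:ℝ) ∈ Set.Icc (φ bh t0 - φ br t0) (φ bh t1 - φ br t1) :=
      ⟨le_of_lt hh0, le_of_lt hh1⟩
    obtain ⟨τ, hτ, he⟩ := hivt h0m
    exact ⟨τ, hτ, he⟩
  have hhMono : MonotoneOn (fun t => φ bh t - φ br t) (Set.Icc t0 t1) := by
    rcases hmd bh br with hm | hm
    · exact hm
    · exfalso
      have h2 := hm mem0 mem1 ht01
      simp only [] at h2
      linarith only [h2, hh0, hh1]
  have htzbh : tz br < tz bh := hroot1 bh hbhne (Ne.symm hbrnebh)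
  have hτgt : tz bh < τ := by
    by_contra hle
    push_neg at hle
    have h2 := hhMono hτI (tzIcc bh hbhne) hle
    simp only [] at h2
    rw [htz_zero bh hbhne] at h2
    have hbrpos : 0 < φ br (tz bh) := hspos br hbr (tz bh) (tzIcc bh hbhne) htzbh
    linarith only [h2, hbrpos, hτ0]
  have hτbr : tz br < τ := lt_trans htzbh hτgt
  have hVpos : 0 < φ br τ := hspos br hbr τ hτI hτbr
  have hτlt1 : τ < t1 := by
    rcases lt_or_eq_of_le hτI.2 with h | h
    · exact h
    · exfalso; rw [h] at hτ0; linarith only [hτ0, hh1]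
  have hτeqv : φ bh τ = φ br τ := by linarith only [hτ0]
  -- upper chord lemma at τ
  have chord1 : ∀ (c : Bundle n) (l m : ℝ), lam1 ≤ l → mu1 * l ≤ lam1 * m →
      φ c t1 = φ br t1 + l * D1v → φ c t0 = φ br t0 + m * D0v → φ c τ ≤ φ br τ := by
    intro c l m hl hweak he1 he0
    have hlpos : 0 < l := lt_of_lt_of_le hlam1.1 hl
    set β := lam1 / l with hβ
    have hβpos : 0 < β := div_pos hlam1.1 hlpos
    have hβle : β ≤ 1 := by rw [hβ, div_le_one hlpos]; exact hl
    have hβl : β * l = lam1 := by rw [hβ]; field_simp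
    have hβm : mu1 ≤ β * m := by
      rw [hβ, div_mul_eq_mul_div, le_div_iff₀ hlpos]
      linarith only [hweak]
    have hg := hscpm bh c br β (le_of_lt hβpos) hβle
    have h0 : 0 ≤ φ bh t0 - (β * φ c t0 + (1 - β) * φ br t0) := by
      rw [he0, hbh0']
      nlinarith only [mul_nonneg (by linarith only [hβm] : (0:ℝ) ≤ β * m - mu1)
        (by linarith only [hD0] : (0:ℝ) ≤ -D0v)]
    have h1 : 0 ≤ φ bh t1 - (β * φ c t1 + (1 - β) * φ br t1) := by
      rw [he1, hbh1']
      have hβl2 : β * (l * D1v) = lam1 * D1v := by rw [← mul_assoc, hβl]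
      nlinarith only [hβl2]
    have hall := sc_nonneg ht01 hg h0 h1 τ hτI
    rw [hτeqv] at hall
    nlinarith only [hall, hβpos]
  -- τ is a global argmax point for br
  have l7τ : ∀ c : Bundle n, φ c τ ≤ φ br τ := by
    intro c
    by_cases hcbh : c = bh
    · rw [hcbh, hτeqv]
    by_cases hcbr : c = br
    · rw [hcbr]
    by_cases hsub : br ⊆ c
    · by_cases hcU : c = U
      · exact chord1 c 1 1 (le_of_lt hlam1.2) (by linarith only [hALG1])
          (by rw [hcU]; exact hU1') (by rw [hcU]; exact hU0')
      by_cases hcwh : c = wh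
      · exact chord1 c lam2 mu2 (le_of_lt hlam_lt) (le_of_lt hALG2)
          (by rw [hcwh]; exact hwh1') (by rw [hcwh]; exact hwh0')
      · have hss1 : br ⊂ c := ssubset_iff_subset_ne.mpr ⟨hsub, Ne.symm hcbr⟩
        have hss2 : c ⊂ U := Finset.ssubset_univ_iff.mpr hcU
        obtain ⟨lc, mc, hce1, hce0, hcs1, hcs2, hcl, hcm⟩ := hother c hss1 hss2 hcbh hcwh
        have hstrict : mu1 * lc < lam1 * mc := by
          rw [div_mul_eq_mul_div, div_lt_iff₀ hlam1.1] at hcs1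
          linarith only [hcs1]
        exact chord1 c lc mc hcl (le_of_lt hstrict) (by rw [hce1, hD1def]; ring)
          (by rw [hce0, hD0def]; ring)
    · by_cases hcE : c = ∅
      · rw [hcE, hempty τ hτI]; linarith only [hVpos]
      · by_contra hgt
        push_neg at hgt
        refine sc_pattern (hpair c br) (tzIcc br hbr) hτI mem1 (le_of_lt hτbr)
          (le_of_lt hτlt1) ?_ ?_ ?_
        · rw [htz_zero br hbr, sub_zero]
          exact hsneg c hcE (tz br) (tzIcc br hbr) (hroot1 c hcE hcbr)
        · linarith only [hgt]
        · linarith only [hroot2 c hsub]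
  -- candidate structure at τ
  have cand1 : ∀ c : Bundle n, c ≠ bh → φ c τ = φ br τ →
      ∃ l m : ℝ, φ c t1 = φ br t1 + l * D1v ∧ φ c t0 = φ br t0 + m * D0v ∧
        mu1 * l ≤ lam1 * m ∧ ((l = 0 ∧ m = 0) ∨ mu1 * l < lam1 * m) := by
    intro c hcbh hceq
    by_cases hcbr : c = br
    · exact ⟨0, 0, by rw [hcbr]; ring, by rw [hcbr]; ring, by norm_num, Or.inl ⟨rfl, rfl⟩⟩
    by_cases hsub : br ⊆ c
    · by_cases hcU : c = U
      · exact ⟨1, 1, by rw [hcU]; exact hU1', by rw [hcU]; exact hU0',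
          by linarith only [hALG1], Or.inr (by linarith only [hALG1])⟩
      by_cases hcwh : c = wh
      · exact ⟨lam2, mu2, by rw [hcwh]; exact hwh1', by rw [hcwh]; exact hwh0',
          le_of_lt hALG2, Or.inr hALG2⟩
      · have hss1 : br ⊂ c := ssubset_iff_subset_ne.mpr ⟨hsub, Ne.symm hcbr⟩
        have hss2 : c ⊂ U := Finset.ssubset_univ_iff.mpr hcU
        obtain ⟨lc, mc, hce1, hce0, hcs1, hcs2, hcl, hcm⟩ := hother c hss1 hss2 hcbh hcwh
        have hstrict : mu1 * lc < lam1 * mc := by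
          rw [div_mul_eq_mul_div, div_lt_iff₀ hlam1.1] at hcs1
          linarith only [hcs1]
        exact ⟨lc, mc, by rw [hce1, hD1def]; ring, by rw [hce0, hD0def]; ring,
          le_of_lt hstrict, Or.inr hstrict⟩
    · exfalso
      by_cases hcE : c = ∅
      · rw [hcE, hempty τ hτI] at hceq; linarith only [hceq, hVpos]
      · refine sc_pattern (hpair c br) (tzIcc br hbr) hτI mem1 (le_of_lt hτbr)
          (le_of_lt hτlt1) ?_ ?_ ?_
        · rw [htz_zero br hbr, sub_zero]
          exact hsneg c hcE (tz br) (tzIcc br hbr) (hroot1 c hcE hcbr)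
        · linarith only [hceq]
        · linarith only [hroot2 c hsub]
  -- the crossing point σ of U and wh
  have hk0 : φ U t0 - φ wh t0 < 0 := by
    rw [hwh0', hU0']
    nlinarith only [mul_pos (by linarith only [hmu2.2] : (0:ℝ) < 1 - mu2) (neg_pos.mpr hD0)]
  have hk1 : 0 < φ U t1 - φ wh t1 := by
    rw [hwh1', hU1']; nlinarith only [mul_pos h1l2 hD1']
  obtain ⟨σ, hσI, hσ0⟩ : ∃ σ ∈ Set.Icc t0 t1, φ U σ - φ wh σ = 0 := by
    have hivt := intermediate_value_Icc ht01 ((hcont U).sub (hcont wh))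
    have h0m : (0:ℝ) ∈ Set.Icc (φ U t0 - φ wh t0) (φ U t1 - φ wh t1) :=
      ⟨le_of_lt hk0, le_of_lt hk1⟩
    obtain ⟨σ, hσ, he⟩ := hivt h0m
    exact ⟨σ, hσ, he⟩
  have hσv : φ U σ = φ wh σ := by linarith only [hσ0]
  have hσlt1 : σ < t1 := by
    rcases lt_or_eq_of_le hσI.2 with h | h
    · exact h
    · exfalso; rw [h] at hσ0; linarith only [hσ0, hk1]
  -- lower chord lemma at σ
  have chord2 : ∀ (c : Bundle n) (l m : ℝ), l ≤ lam2 →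
      (1 - mu2) * l + (mu2 - lam2) ≤ (1 - lam2) * m →
      φ c t1 = φ br t1 + l * D1v → φ c t0 = φ br t0 + m * D0v → φ c σ ≤ φ wh σ := by
    intro c l m hl hweak he1 he0
    have h1lpos : 0 < 1 - l := by linarith only [hl, hlam2.2]
    set γ := (1 - lam2) / (1 - l) with hγ
    have hγpos : 0 < γ := div_pos h1l2 h1lpos
    have hγle : γ ≤ 1 := by
      rw [hγ, div_le_one h1lpos]; linarith only [hl]
    have hγl : γ * (1 - l) = 1 - lam2 := by rw [hγ]; field_simp
    have hγm : mu2 ≤ γ * m + 1 - γ := by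
      have hA : (1 - lam2) * (1 - m) ≤ (1 - mu2) * (1 - l) := by nlinarith only [hweak]
      have hB : γ * (1 - m) ≤ 1 - mu2 := by
        rw [hγ, div_mul_eq_mul_div, div_le_iff₀ h1lpos]
        linarith only [hA]
      nlinarith only [hB]
    have hg := hscpm wh c U γ (le_of_lt hγpos) hγle
    have h0 : 0 ≤ φ wh t0 - (γ * φ c t0 + (1 - γ) * φ U t0) := by
      rw [he0, hwh0', hU0']
      nlinarith only [mul_nonneg (by linarith only [hγm] : (0:ℝ) ≤ γ * m + 1 - γ - mu2)
        (by linarith only [hD0] : (0:ℝ) ≤ -D0v)]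
    have h1 : 0 ≤ φ wh t1 - (γ * φ c t1 + (1 - γ) * φ U t1) := by
      rw [he1, hwh1', hU1']
      have hthis : γ * l = γ - (1 - lam2) := by nlinarith only [hγl]
      have hγl2 : γ * (l * D1v) + (1 - γ) * D1v = lam2 * D1v := by
        linear_combination D1v * hthis
      nlinarith only [hγl2]
    have hall := sc_nonneg ht01 hg h0 h1 σ hσI
    rw [← hσv] at hall
    nlinarith only [hall, hγpos, hσv]
  have hbrσ : φ br σ ≤ φ wh σ :=
    chord2 br 0 0 (by linarith only [hlam2.1]) (by nlinarith only [hALG3]) (by ring) (by ring)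
  have hvpos : 0 < φ wh σ := by
    rcases lt_trichotomy (φ wh σ) 0 with h | h | h
    · exfalso
      have hbrneg : φ br σ < 0 := lt_of_le_of_lt hbrσ h
      have hσtzbr : σ < tz br := by
        rcases lt_trichotomy σ (tz br) with h' | h' | h'
        · exact h'
        · exfalso; rw [h', htz_zero br hbr] at hbrneg; linarith only [hbrneg]
        · exact absurd (hspos br hbr σ hσI h') (by linarith only [hbrneg])
      have he2 := heMono hσI (tzIcc br hbr) (le_of_lt hσtzbr)
      simp only [] at he2
      rw [htz_zero br hbr] at he2
      have hUneg : φ U (tz br) < 0 :=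
        hsneg U hUne (tz br) (tzIcc br hbr) (hroot1 U hUne (Ne.symm hbrneU))
      linarith only [he2, hUneg, hσv, hbrσ]
    · exfalso
      have hσz : σ = tz wh := htz_uniq wh hwhne σ hσI h
      have htzlt : tz br < σ := by rw [hσz]; exact hroot1 wh hwhne hwhnebr
      have := hspos br hbr σ hσI htzlt
      linarith only [this, hbrσ, h]
    · exact h
  have hσtzwh : tz wh < σ := by
    rcases lt_trichotomy σ (tz wh) with h' | h' | h'
    · exact absurd (hsneg wh hwhne σ hσI h') (by linarith only [hvpos])
    · exfalso; rw [h', htz_zero wh hwhne] at hvpos; linarith only [hvpos]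
    · exact h'
  have hσbr : tz br < σ := lt_trans (hroot1 wh hwhne hwhnebr) hσtzwh
  -- σ is a global argmax point for wh
  have l7σ : ∀ c : Bundle n, φ c σ ≤ φ wh σ := by
    intro c
    by_cases hcwh : c = wh
    · rw [hcwh]
    by_cases hcU : c = U
    · rw [hcU, hσv]
    by_cases hcbr : c = br
    · rw [hcbr]; exact hbrσ
    by_cases hcbh : c = bh
    · rw [hcbh]
      exact chord2 bh lam1 mu1 (le_of_lt hlam_lt) (le_of_lt hALG4) hbh1' hbh0'
    by_cases hsub : br ⊆ c
    · have hss1 : br ⊂ c := ssubset_iff_subset_ne.mpr ⟨hsub, Ne.symm hcbr⟩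
      have hss2 : c ⊂ U := Finset.ssubset_univ_iff.mpr hcU
      obtain ⟨lc, mc, hce1, hce0, hcs1, hcs2, hcl, hcm⟩ := hother c hss1 hss2 hcbh hcwh
      have hstrict2 : (1 - mu2) * lc + (mu2 - lam2) < (1 - lam2) * mc := by
        rw [div_mul_eq_mul_div, ← add_div, div_lt_iff₀ h1l2] at hcs2
        linarith only [hcs2]
      have hlc2 : lc ≤ lam2 := by
        nlinarith only [hstrict2, mul_le_mul_of_nonneg_left hcm (le_of_lt h1l2),
          sub_pos.mpr hmu2.2]
      exact chord2 c lc mc hlc2 (le_of_lt hstrict2) (by rw [hce1, hD1def]; ring)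
        (by rw [hce0, hD0def]; ring)
    · by_cases hcE : c = ∅
      · rw [hcE, hempty σ hσI]; linarith only [hvpos]
      · by_contra hgt
        push_neg at hgt
        refine sc_pattern (hpair c br) (tzIcc br hbr) hσI mem1 (le_of_lt hσbr)
          (le_of_lt hσlt1) ?_ ?_ ?_
        · rw [htz_zero br hbr, sub_zero]
          exact hsneg c hcE (tz br) (tzIcc br hbr) (hroot1 c hcE hcbr)
        · linarith only [hgt, hbrσ]
        · linarith only [hroot2 c hsub]
  -- candidate structure at σ
  have cand2 : ∀ c : Bundle n, c ≠ wh → φ c σ = φ wh σ →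
      ∃ l m : ℝ, φ c t1 = φ br t1 + l * D1v ∧ φ c t0 = φ br t0 + m * D0v ∧
        (1 - mu2) * l + (mu2 - lam2) ≤ (1 - lam2) * m ∧
        ((l = 1 ∧ m = 1) ∨ (1 - mu2) * l + (mu2 - lam2) < (1 - lam2) * m) := by
    intro c hcwh hceq
    by_cases hcU : c = U
    · exact ⟨1, 1, by rw [hcU]; exact hU1', by rw [hcU]; exact hU0',
        by linarith only [], Or.inl ⟨rfl, rfl⟩⟩
    by_cases hcbr : c = br
    · exact ⟨0, 0, by rw [hcbr]; ring, by rw [hcbr]; ring,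
        by linarith only [hALG3], Or.inr (by linarith only [hALG3])⟩
    by_cases hcbh : c = bh
    · exact ⟨lam1, mu1, by rw [hcbh]; exact hbh1', by rw [hcbh]; exact hbh0',
        le_of_lt hALG4, Or.inr hALG4⟩
    by_cases hsub : br ⊆ c
    · have hss1 : br ⊂ c := ssubset_iff_subset_ne.mpr ⟨hsub, Ne.symm hcbr⟩
      have hss2 : c ⊂ U := Finset.ssubset_univ_iff.mpr hcU
      obtain ⟨lc, mc, hce1, hce0, hcs1, hcs2, hcl, hcm⟩ := hother c hss1 hss2 hcbh hcwh
      have hstrict2 : (1 - mu2) * lc + (mu2 - lam2) < (1 - lam2) * mc := by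
        rw [div_mul_eq_mul_div, ← add_div, div_lt_iff₀ h1l2] at hcs2
        linarith only [hcs2]
      exact ⟨lc, mc, by rw [hce1, hD1def]; ring, by rw [hce0, hD0def]; ring,
        le_of_lt hstrict2, Or.inr hstrict2⟩
    · exfalso
      by_cases hcE : c = ∅
      · rw [hcE, hempty σ hσI] at hceq; linarith only [hceq, hvpos]
      · refine sc_pattern (hpair c br) (tzIcc br hbr) hσI mem1 (le_of_lt hσbr)
          (le_of_lt hσlt1) ?_ ?_ ?_
        · rw [htz_zero br hbr, sub_zero]
          exact hsneg c hcE (tz br) (tzIcc br hbr) (hroot1 c hcE hcbr)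
        · linarith only [hceq, hbrσ]
        · linarith only [hroot2 c hsub]
  -- membership of ∅, U, br in S
  have hES : (∅ : Bundle n) ∈ S := by
    obtain ⟨b0, hb0S, hmax⟩ := hS.1 t0 mem0
    by_cases h : b0 = (∅ : Bundle n)
    · rwa [h] at hb0S
    · exfalso
      have h2 := hmax (∅ : Bundle n)
      rw [hempty t0 mem0] at h2
      linarith only [h2, hneg b0 h]
  have hUmax : ∀ c : Bundle n, c ≠ U → φ c t1 < φ U t1 := by
    intro c hcU
    by_cases hsub : br ⊆ c
    · exact hmono c U hsub (Finset.ssubset_univ_iff.mpr hcU) (Finset.Subset.refl _)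
    · linarith only [hroot2 c hsub, hD1, hD1def]
  have hUS : U ∈ S := by
    obtain ⟨b0, hb0S, hmax⟩ := hS.1 t1 mem1
    by_cases h : b0 = U
    · rwa [h] at hb0S
    · exfalso
      linarith only [hmax U, hUmax b0 h]
  have hBrS : br ∈ S := by
    set others : Finset (Bundle n) :=
      Finset.univ.filter (fun b : Bundle n => b ≠ ∅ ∧ b ≠ br) with hothers
    have hUoth : U ∈ others := by
      rw [hothers, Finset.mem_filter]
      exact ⟨Finset.mem_univ _, hUne, Ne.symm hbrneU⟩
    have himg : (others.image tz).Nonempty := ⟨tz U, Finset.mem_image_of_mem tz hUoth⟩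
    set T' := (others.image tz).min' himg with hT'
    obtain ⟨bw, hbw, hbweq⟩ := Finset.mem_image.mp ((others.image tz).min'_mem himg)
    rw [hothers, Finset.mem_filter] at hbw
    have hT'gt : tz br < T' := by
      rw [hT', ← hbweq]
      exact hroot1 bw hbw.2.1 hbw.2.2
    have hT'le : ∀ b : Bundle n, b ≠ ∅ → b ≠ br → T' ≤ tz b := by
      intro b h1 h2
      refine Finset.min'_le _ _ (Finset.mem_image_of_mem tz ?_)
      rw [hothers, Finset.mem_filter]
      exact ⟨Finset.mem_univ _, h1, h2⟩
    set t' := (tz br + T') / 2 with ht'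
    have ht'1 : tz br < t' := by rw [ht']; linarith only [hT'gt]
    have ht'2 : t' < T' := by rw [ht']; linarith only [hT'gt]
    have hT'bw : T' ≤ tz bw := le_of_eq hbweq.symm
    have ht'I : t' ∈ Set.Icc t0 t1 := by
      constructor
      · have := (htz_mem br hbr).1
        rw [ht']; linarith only [this, hT'gt]
      · have := (htz_mem bw hbw.2.1).2
        rw [ht']; linarith only [this, hT'gt, hT'bw]
    have hbrpos : 0 < φ br t' := hspos br hbr t' ht'I ht'1
    obtain ⟨b0, hb0S, hmax⟩ := hS.1 t' ht'I
    by_cases h : b0 = br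
    · rwa [h] at hb0S
    · exfalso
      by_cases hE : b0 = (∅ : Bundle n)
      · have h2 := hmax br
        rw [hE, hempty t' ht'I] at h2
        linarith only [h2, hbrpos]
      · have hneg' : φ b0 t' < 0 :=
          hsneg b0 hE t' ht'I (lt_of_lt_of_le ht'2 (hT'le b0 hE h))
        linarith only [hneg', hmax br, hbrpos]
  -- the root property
  have hRoot : ∀ b ∈ S, b ≠ (∅ : Bundle n) → br ⊆ b := by
    intro b hbS hbne
    by_cases hbbr : b = br
    · rw [hbbr]
    by_contra hnsub
    have herase := hS.2 (S.erase b) (Finset.erase_ssubset hbS)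
    unfold OptimalMenu at herase
    push_neg at herase
    obtain ⟨t, htI, hbad⟩ := herase
    obtain ⟨b0, hb0S, hmax⟩ := hS.1 t htI
    have hb0b : b0 = b := by
      by_contra hne
      obtain ⟨c, hc⟩ := hbad b0 (Finset.mem_erase.mpr ⟨hne, hb0S⟩)
      linarith only [hc, hmax c]
    have hbrlt : φ br t < φ b t := by
      obtain ⟨c, hc⟩ := hbad br (Finset.mem_erase.mpr ⟨fun h => hbbr h.symm, hBrS⟩)
      have h2 := hmax c
      rw [hb0b] at h2
      linarith only [hc, h2]
    have h0lt : 0 < φ b t := by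
      obtain ⟨c, hc⟩ := hbad (∅ : Bundle n)
        (Finset.mem_erase.mpr ⟨fun h => hbne h.symm, hES⟩)
      have h2 := hmax c
      rw [hb0b] at h2
      rw [hempty t htI] at hc
      linarith only [hc, h2]
    have httzb : tz b < t := by
      rcases lt_trichotomy t (tz b) with h' | h' | h'
      · exact absurd (hsneg b hbne t htI h') (by linarith only [h0lt])
      · exfalso; rw [h', htz_zero b hbne] at h0lt; linarith only [h0lt]
      · exact h'
    have httzbr : tz br < t := lt_trans (hroot1 b hbne hbbr) httzb
    have htlt1 : t < t1 := by
      rcases lt_or_eq_of_le htI.2 with h' | h'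
      · exact h'
      · exfalso
        rw [h'] at hbrlt
        linarith only [hbrlt, hroot2 b hnsub]
    exact sc_pattern (hpair b br) (tzIcc br hbr) htI mem1 (le_of_lt httzbr) (le_of_lt htlt1)
      (by rw [htz_zero br hbr, sub_zero]
          exact hsneg b hbne (tz br) (tzIcc br hbr) (hroot1 b hbne hbbr))
      (by linarith only [hbrlt])
      (by linarith only [hroot2 b hnsub])
  -- membership of bh in S
  have hbhS : bh ∈ S := by
    by_contra hbhnS
    have hnb : ∀ t ∈ Set.Icc t0 t1, ∃ c, c ≠ bh ∧ φ bh t ≤ φ c t := by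
      intro t htI
      obtain ⟨b0, hb0S, hmax⟩ := hS.1 t htI
      exact ⟨b0, fun h => hbhnS (h ▸ hb0S), hmax bh⟩
    obtain ⟨c1, c2, hc1, hc2, x, hxI, hcov1, hcov2⟩ := cover_exists φ hcont hpair bh hnb ht01
    obtain ⟨w, hw0, hw1, hdom0, hdom1⟩ := mix_exists ht01
      (fun w hw0 hw1 => hscmp bh c1 c2 w hw0 hw1) hxI
      (hcov1 x hxI (le_refl x)) (hcov2 x hxI (le_refl x))
      (hcov1 t0 mem0 hxI.1) (hcov2 t1 mem1 hxI.2)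
    have hglob := sc_nonneg ht01 (hscmp bh c1 c2 w hw0 hw1)
      (by show (0:ℝ) ≤ w * φ c1 t0 + (1 - w) * φ c2 t0 - φ bh t0; linarith only [hdom0])
      (by show (0:ℝ) ≤ w * φ c1 t1 + (1 - w) * φ c2 t1 - φ bh t1; linarith only [hdom1])
    have hatτ := hglob τ hτI
    have hle1 := l7τ c1
    have hle2 := l7τ c2
    have hcomp1 : 0 < w → φ c1 τ = φ br τ := by
      intro hwpos
      by_contra hne
      have h1 : φ c1 τ < φ br τ := lt_of_le_of_ne hle1 hne
      nlinarith only [mul_lt_mul_of_pos_left h1 hwpos,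
        mul_le_mul_of_nonneg_left hle2 (by linarith only [hw1] : (0:ℝ) ≤ 1 - w),
        hτeqv, hatτ]
    have hcomp2 : w < 1 → φ c2 τ = φ br τ := by
      intro hwlt
      by_contra hne
      have h1 : φ c2 τ < φ br τ := lt_of_le_of_ne hle2 hne
      nlinarith only [mul_lt_mul_of_pos_left h1 (by linarith only [hwlt] : (0:ℝ) < 1 - w),
        mul_le_mul_of_nonneg_left hle1 hw0, hτeqv, hatτ]
    have hget : ∀ (w' : ℝ) (c : Bundle n), 0 ≤ w' → c ≠ bh → (0 < w' → φ c τ = φ br τ) →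
        ∃ l m : ℝ, w' * φ c t1 = w' * (φ br t1 + l * D1v) ∧
          w' * φ c t0 = w' * (φ br t0 + m * D0v) ∧
          mu1 * l ≤ lam1 * m ∧ (w' * l = 0 ∨ mu1 * l < lam1 * m) := by
      intro w' c hw' hcb hctau
      rcases eq_or_lt_of_le hw' with h | h
      · exact ⟨0, 0, by rw [← h]; ring, by rw [← h]; ring, by norm_num,
          Or.inl (by rw [← h]; ring)⟩
      · obtain ⟨l, m, he1, he0, hweak, hdisj⟩ := cand1 c hcb (hctau h)
        refine ⟨l, m, by rw [he1], by rw [he0], hweak, ?_⟩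
        rcases hdisj with ⟨hl0, _⟩ | hstr
        · exact Or.inl (by rw [hl0]; ring)
        · exact Or.inr hstr
    obtain ⟨l1, m1, ha1, ha0, hweak1, hd1⟩ := hget w c1 hw0 hc1 hcomp1
    obtain ⟨l2, m2, hb1', hb0'', hweak2, hd2⟩ := hget (1 - w) c2 (by linarith only [hw1]) hc2
      (fun h => hcomp2 (by linarith only [h]))
    have hL : lam1 ≤ w * l1 + (1 - w) * l2 := by
      have hstep : φ br t1 + lam1 * D1v ≤ φ br t1 + (w * l1 + (1 - w) * l2) * D1v := by
        have e1 : w * φ c1 t1 + (1 - w) * φ c2 t1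
            = φ br t1 + (w * l1 + (1 - w) * l2) * D1v := by
          rw [ha1, hb1']; ring
        rw [← e1, ← hbh1']
        exact hdom1
      nlinarith only [hstep, hD1']
    have hM : w * m1 + (1 - w) * m2 ≤ mu1 := by
      have hstep : φ br t0 + mu1 * D0v ≤ φ br t0 + (w * m1 + (1 - w) * m2) * D0v := by
        have e0 : w * φ c1 t0 + (1 - w) * φ c2 t0
            = φ br t0 + (w * m1 + (1 - w) * m2) * D0v := by
          rw [ha0, hb0'']; ring
        rw [← e0, ← hbh0']
        exact hdom0
      nlinarith only [hstep, hD0]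
    have u1 : w * (mu1 * l1) ≤ w * (lam1 * m1) := mul_le_mul_of_nonneg_left hweak1 hw0
    have u2 : (1 - w) * (mu1 * l2) ≤ (1 - w) * (lam1 * m2) :=
      mul_le_mul_of_nonneg_left hweak2 (by linarith only [hw1])
    have hchain1 : mu1 * lam1 ≤ mu1 * (w * l1 + (1 - w) * l2) :=
      mul_le_mul_of_nonneg_left hL (le_of_lt hmu1.1)
    have hchain2 : lam1 * (w * m1 + (1 - w) * m2) ≤ lam1 * mu1 :=
      mul_le_mul_of_nonneg_left hM (le_of_lt hlam1.1)
    have hsum : w * (lam1 * m1 - mu1 * l1) + (1 - w) * (lam1 * m2 - mu1 * l2) = 0 := by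
      have hWW : mu1 * (w * l1 + (1 - w) * l2) ≤ lam1 * (w * m1 + (1 - w) * m2) := by
        nlinarith only [u1, u2]
      have heqall : mu1 * (w * l1 + (1 - w) * l2) = lam1 * (w * m1 + (1 - w) * m2) := by
        nlinarith only [hWW, hchain1, hchain2]
      nlinarith only [heqall]
    have s1 : 0 ≤ w * (lam1 * m1 - mu1 * l1) := by nlinarith only [u1]
    have s2 : 0 ≤ (1 - w) * (lam1 * m2 - mu1 * l2) := by nlinarith only [u2]
    have hz1 : w * (lam1 * m1 - mu1 * l1) = 0 := by linarith only [s1, s2, hsum]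
    have hz2 : (1 - w) * (lam1 * m2 - mu1 * l2) = 0 := by linarith only [s1, s2, hsum]
    have hwl1 : w * l1 = 0 := by
      rcases hd1 with h | h
      · exact h
      · rcases mul_eq_zero.mp hz1 with h' | h'
        · rw [h']; ring
        · exfalso; linarith only [h, h']
    have hwl2 : (1 - w) * l2 = 0 := by
      rcases hd2 with h | h
      · exact h
      · rcases mul_eq_zero.mp hz2 with h' | h'
        · rw [h']; ring
        · exfalso; linarith only [h, h']
    have hzero : w * l1 + (1 - w) * l2 = 0 := by rw [hwl1, hwl2]; ring
    rw [hzero] at hL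
    linarith only [hL, hlam1.1]
  -- membership of wh in S
  have hwhS : wh ∈ S := by
    by_contra hwhnS
    have hnb : ∀ t ∈ Set.Icc t0 t1, ∃ c, c ≠ wh ∧ φ wh t ≤ φ c t := by
      intro t htI
      obtain ⟨b0, hb0S, hmax⟩ := hS.1 t htI
      exact ⟨b0, fun h => hwhnS (h ▸ hb0S), hmax wh⟩
    obtain ⟨c1, c2, hc1, hc2, x, hxI, hcov1, hcov2⟩ := cover_exists φ hcont hpair wh hnb ht01
    obtain ⟨w, hw0, hw1, hdom0, hdom1⟩ := mix_exists ht01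
      (fun w hw0 hw1 => hscmp wh c1 c2 w hw0 hw1) hxI
      (hcov1 x hxI (le_refl x)) (hcov2 x hxI (le_refl x))
      (hcov1 t0 mem0 hxI.1) (hcov2 t1 mem1 hxI.2)
    have hglob := sc_nonneg ht01 (hscmp wh c1 c2 w hw0 hw1)
      (by show (0:ℝ) ≤ w * φ c1 t0 + (1 - w) * φ c2 t0 - φ wh t0; linarith only [hdom0])
      (by show (0:ℝ) ≤ w * φ c1 t1 + (1 - w) * φ c2 t1 - φ wh t1; linarith only [hdom1])
    have hatσ := hglob σ hσI
    have hle1 := l7σ c1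
    have hle2 := l7σ c2
    have hcomp1 : 0 < w → φ c1 σ = φ wh σ := by
      intro hwpos
      by_contra hne
      have h1 : φ c1 σ < φ wh σ := lt_of_le_of_ne hle1 hne
      nlinarith only [mul_lt_mul_of_pos_left h1 hwpos,
        mul_le_mul_of_nonneg_left hle2 (by linarith only [hw1] : (0:ℝ) ≤ 1 - w), hatσ]
    have hcomp2 : w < 1 → φ c2 σ = φ wh σ := by
      intro hwlt
      by_contra hne
      have h1 : φ c2 σ < φ wh σ := lt_of_le_of_ne hle2 hne
      nlinarith only [mul_lt_mul_of_pos_left h1 (by linarith only [hwlt] : (0:ℝ) < 1 - w),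
        mul_le_mul_of_nonneg_left hle1 hw0, hatσ]
    have hget : ∀ (w' : ℝ) (c : Bundle n), 0 ≤ w' → c ≠ wh → (0 < w' → φ c σ = φ wh σ) →
        ∃ l m : ℝ, w' * φ c t1 = w' * (φ br t1 + l * D1v) ∧
          w' * φ c t0 = w' * (φ br t0 + m * D0v) ∧
          (1 - mu2) * l + (mu2 - lam2) ≤ (1 - lam2) * m ∧
          (w' * (1 - m) = 0 ∨ (1 - mu2) * l + (mu2 - lam2) < (1 - lam2) * m) := by
      intro w' c hw' hcb hctau
      rcases eq_or_lt_of_le hw' with h | h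
      · exact ⟨1, 1, by rw [← h]; ring, by rw [← h]; ring, by linarith only [],
          Or.inl (by rw [← h]; ring)⟩
      · obtain ⟨l, m, he1, he0, hweak, hdisj⟩ := cand2 c hcb (hctau h)
        refine ⟨l, m, by rw [he1], by rw [he0], hweak, ?_⟩
        rcases hdisj with ⟨_, hm1⟩ | hstr
        · exact Or.inl (by rw [hm1]; ring)
        · exact Or.inr hstr
    obtain ⟨l1, m1, ha1, ha0, hweak1, hd1⟩ := hget w c1 hw0 hc1 hcomp1
    obtain ⟨l2, m2, hb1', hb0'', hweak2, hd2⟩ := hget (1 - w) c2 (by linarith only [hw1]) hc2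
      (fun h => hcomp2 (by linarith only [h]))
    have hL : lam2 ≤ w * l1 + (1 - w) * l2 := by
      have hstep : φ br t1 + lam2 * D1v ≤ φ br t1 + (w * l1 + (1 - w) * l2) * D1v := by
        have e1 : w * φ c1 t1 + (1 - w) * φ c2 t1
            = φ br t1 + (w * l1 + (1 - w) * l2) * D1v := by
          rw [ha1, hb1']; ring
        rw [← e1, ← hwh1']
        exact hdom1
      nlinarith only [hstep, hD1']
    have hM : w * m1 + (1 - w) * m2 ≤ mu2 := by
      have hstep : φ br t0 + mu2 * D0v ≤ φ br t0 + (w * m1 + (1 - w) * m2) * D0v := by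
        have e0 : w * φ c1 t0 + (1 - w) * φ c2 t0
            = φ br t0 + (w * m1 + (1 - w) * m2) * D0v := by
          rw [ha0, hb0'']; ring
        rw [← e0, ← hwh0']
        exact hdom0
      nlinarith only [hstep, hD0]
    have u1 : w * ((1 - mu2) * l1 + (mu2 - lam2)) ≤ w * ((1 - lam2) * m1) :=
      mul_le_mul_of_nonneg_left hweak1 hw0
    have u2 : (1 - w) * ((1 - mu2) * l2 + (mu2 - lam2)) ≤ (1 - w) * ((1 - lam2) * m2) :=
      mul_le_mul_of_nonneg_left hweak2 (by linarith only [hw1])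
    have hchain1 : mu2 * (1 - lam2) ≤ (1 - mu2) * (w * l1 + (1 - w) * l2) + (mu2 - lam2) := by
      nlinarith only [mul_le_mul_of_nonneg_left hL
        (by linarith only [hmu2.2] : (0:ℝ) ≤ 1 - mu2)]
    have hchain2 : (1 - lam2) * (w * m1 + (1 - w) * m2) ≤ (1 - lam2) * mu2 :=
      mul_le_mul_of_nonneg_left hM (le_of_lt h1l2)
    have hsum : w * ((1 - lam2) * m1 - ((1 - mu2) * l1 + (mu2 - lam2)))
        + (1 - w) * ((1 - lam2) * m2 - ((1 - mu2) * l2 + (mu2 - lam2))) = 0 := by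
      have hWW : (1 - mu2) * (w * l1 + (1 - w) * l2) + (mu2 - lam2)
          ≤ (1 - lam2) * (w * m1 + (1 - w) * m2) := by
        nlinarith only [u1, u2]
      have heqall : (1 - mu2) * (w * l1 + (1 - w) * l2) + (mu2 - lam2)
          = (1 - lam2) * (w * m1 + (1 - w) * m2) := by
        nlinarith only [hWW, hchain1, hchain2]
      nlinarith only [heqall]
    have s1 : 0 ≤ w * ((1 - lam2) * m1 - ((1 - mu2) * l1 + (mu2 - lam2))) := by
      nlinarith only [u1]
    have s2 : 0 ≤ (1 - w) * ((1 - lam2) * m2 - ((1 - mu2) * l2 + (mu2 - lam2))) := by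
      nlinarith only [u2]
    have hz1 : w * ((1 - lam2) * m1 - ((1 - mu2) * l1 + (mu2 - lam2))) = 0 := by
      linarith only [s1, s2, hsum]
    have hz2 : (1 - w) * ((1 - lam2) * m2 - ((1 - mu2) * l2 + (mu2 - lam2))) = 0 := by
      linarith only [s1, s2, hsum]
    have hwm1 : w * (1 - m1) = 0 := by
      rcases hd1 with h | h
      · exact h
      · rcases mul_eq_zero.mp hz1 with h' | h'
        · rw [h']; ring
        · exfalso; linarith only [h, h']
    have hwm2 : (1 - w) * (1 - m2) = 0 := by
      rcases hd2 with h | h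
      · exact h
      · rcases mul_eq_zero.mp hz2 with h' | h'
        · rw [h']; ring
        · exfalso; linarith only [h, h']
    have hMM1 : w * m1 + (1 - w) * m2 = 1 := by nlinarith only [hwm1, hwm2]
    rw [hMM1] at hM
    linarith only [hM, hmu2.2]
  -- assemble the tree menu
  exact ⟨⟨br, hBrS, hbr, hRoot⟩, ⟨bh, hbhS, wh, hwhS, hnbw, hnwb⟩⟩
end Paper
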